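/- arXiv:1110.0682 — 2 statements merged into one kernel-verified Lean document; each statement's English description precedes it below -/
import Mathlib

section
/- For the trapezoid P with vertices (0,0), (α+k,0), (α,1), (0,1), k a nonnegative integer, the barycenter of the boundary with respect to lattice length measure is ((α² + α(k+1) + k(k+1)/2)/(2+2α+k), (α+1)/(2+2α+k)). -/
open MeasureTheory

/-- The lattice length of the segment from `v` to `w`: the value `|u|` where
`w - v = u • (p, q)` for a primitive (coprime) integer vector `(p, q)`. -/
noncomputable def latticeLength (v w : ℝ × ℝ) : ℝ :=
  sInf {r : ℝ | ∃ (u : ℝ) (p q : ℤ), IsCoprime p q ∧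
    w - v = u • ((p : ℝ), (q : ℝ)) ∧ r = |u|}

/-- Integral of `f` over the segment from `v` to `w` with respect to the lattice
length measure dλ (equal to `latticeLength v w` times normalized length measure). -/
noncomputable def edgeInt (v w : ℝ × ℝ) (f : ℝ × ℝ → ℝ) : ℝ :=
  latticeLength v w * ∫ t in (0:ℝ)..(1:ℝ), f (v + t • (w - v))

/-- The trapezoid with vertices (0,0), (α+k,0), (α,1), (0,1). -/
noncomputable def trap (α k : ℝ) : Set (ℝ × ℝ) :=
  convexHull ℝ ({(0, 0), (α + k, 0), (α, 1), (0, 1)} : Set (ℝ × ℝ))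

noncomputable def trapArea (α k : ℝ) : ℝ := (volume (trap α k)).toReal

noncomputable def trapPerim (α k : ℝ) : ℝ :=
  latticeLength (0, 0) (α + k, 0) + latticeLength (α + k, 0) (α, 1) +
    latticeLength (α, 1) (0, 1) + latticeLength (0, 1) (0, 0)

noncomputable def trapCentroid (α k : ℝ) : ℝ × ℝ :=
  ((∫ p in trap α k, p.1) / trapArea α k, (∫ p in trap α k, p.2) / trapArea α k)

noncomputable def trapBdryInt (α k : ℝ) (f : ℝ × ℝ → ℝ) : ℝ :=
  edgeInt (0, 0) (α + k, 0) f + edgeInt (α + k, 0) (α, 1) f +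
    edgeInt (α, 1) (0, 1) f + edgeInt (0, 1) (0, 0) f

noncomputable def trapBdryBary (α k : ℝ) : ℝ × ℝ :=
  (trapBdryInt α k (fun p => p.1) / trapPerim α k,
   trapBdryInt α k (fun p => p.2) / trapPerim α k)

/-- The vector 𝔇 joining the interior barycenter to the boundary barycenter. -/
noncomputable def trapD (α k : ℝ) : ℝ × ℝ := trapBdryBary α k - trapCentroid α k

/-- The moment-of-inertia matrix Π of the trapezoid about its barycenter. -/
noncomputable def trapPi (α k : ℝ) : Matrix (Fin 2) (Fin 2) ℝ :=
  !![∫ p in trap α k, (p.1 - (trapCentroid α k).1) * (p.1 - (trapCentroid α k).1),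
     ∫ p in trap α k, (p.1 - (trapCentroid α k).1) * (p.2 - (trapCentroid α k).2);
     ∫ p in trap α k, (p.2 - (trapCentroid α k).2) * (p.1 - (trapCentroid α k).1),
     ∫ p in trap α k, (p.2 - (trapCentroid α k).2) * (p.2 - (trapCentroid α k).2)]

lemma latticeLength_horiz (v w : ℝ × ℝ) (c : ℝ) (h : w - v = (c, 0)) (hc : c ≠ 0) :
    latticeLength v w = |c| := by
  unfold latticeLength
  have hset : {r : ℝ | ∃ (u : ℝ) (p q : ℤ), IsCoprime p q ∧
      w - v = u • ((p : ℝ), (q : ℝ)) ∧ r = |u|} = {|c|} := by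
    ext r
    simp only [Set.mem_setOf_eq, Set.mem_singleton_iff]
    constructor
    · rintro ⟨u, p, q, hcop, heq, rfl⟩
      rw [h, Prod.ext_iff] at heq
      obtain ⟨h1, h2⟩ := heq
      simp only [Prod.smul_fst, Prod.smul_snd, smul_eq_mul] at h1 h2
      have hu : u ≠ 0 := by
        rintro rfl; exact hc (by simpa using h1)
      have hq0 : q = 0 := by
        have : (q : ℝ) = 0 := by
          rcases mul_eq_zero.mp h2.symm with h' | h'
          · exact absurd h' hu
          · exact h'
        exact_mod_cast this
      subst hq0
      have hp' : p = 1 ∨ p = -1 := Int.isUnit_iff.mp ((isCoprime_zero_right).mp hcop)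
      rw [h1, abs_mul]
      rcases hp' with rfl | rfl <;> simp
    · rintro rfl
      exact ⟨c, 1, 0, isCoprime_one_left, by simp [h, Prod.ext_iff], rfl⟩
  rw [hset, csInf_singleton]

lemma latticeLength_prim (v w : ℝ × ℝ) (n m : ℤ) (hm : m = 1 ∨ m = -1)
    (h : w - v = ((n : ℝ), (m : ℝ))) : latticeLength v w = 1 := by
  unfold latticeLength
  have hset : {r : ℝ | ∃ (u : ℝ) (p q : ℤ), IsCoprime p q ∧
      w - v = u • ((p : ℝ), (q : ℝ)) ∧ r = |u|} = {1} := by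
    ext r
    simp only [Set.mem_setOf_eq, Set.mem_singleton_iff]
    constructor
    · rintro ⟨u, p, q, hcop, heq, rfl⟩
      rw [h, Prod.ext_iff] at heq
      obtain ⟨h1, h2⟩ := heq
      simp only [Prod.smul_fst, Prod.smul_snd, smul_eq_mul] at h1 h2
      have hpm : (p : ℝ) * (m : ℝ) = (n : ℝ) * (q : ℝ) := by
        calc (p : ℝ) * m = p * (u * q) := by rw [← h2]
        _ = (u * p) * q := by ring
        _ = (n : ℝ) * q := by rw [← h1]
      have hpm' : p * m = n * q := by exact_mod_cast hpm
      have hqd : IsUnit q := by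
        refine hcop.isUnit_of_dvd' ?_ dvd_rfl
        rcases hm with rfl | rfl
        · exact ⟨n, by linarith⟩
        · exact ⟨-n, by linarith⟩
      have hq' : q = 1 ∨ q = -1 := Int.isUnit_iff.mp hqd
      have hu : u = 1 ∨ u = -1 := by
        rcases hq' with rfl | rfl <;> rcases hm with h' | h' <;> rw [h'] at h2 <;>
          push_cast at h2
        · left; linarith
        · right; linarith
        · right; linarith
        · left; linarith
      rcases hu with rfl | rfl <;> simp
    · rintro rfl
      refine ⟨1, n, m, ?_, by simp [h], by simp⟩
      rcases hm with rfl | rfl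
      · exact isCoprime_one_right
      · exact (isCoprime_one_right (x := n)).neg_right
  rw [hset, csInf_singleton]

lemma integral_affine (a b : ℝ) : ∫ t in (0:ℝ)..1, (a + t * b) = a + b / 2 := by
  have h1 : IntervalIntegrable (fun _ : ℝ => a) volume 0 1 := intervalIntegrable_const
  have h2 : IntervalIntegrable (fun t : ℝ => t * b) volume 0 1 :=
    (intervalIntegral.intervalIntegrable_id).mul_const b
  rw [intervalIntegral.integral_add h1 h2, intervalIntegral.integral_const,
    intervalIntegral.integral_mul_const, integral_id, smul_eq_mul]
  ring

lemma integral_seg_fst (v w : ℝ × ℝ) :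
    ∫ t in (0:ℝ)..1, (v + t • (w - v)).1 = (v.1 + w.1) / 2 := by
  simp only [Prod.fst_add, Prod.smul_fst, Prod.fst_sub, smul_eq_mul]
  rw [integral_affine]; ring

lemma integral_seg_snd (v w : ℝ × ℝ) :
    ∫ t in (0:ℝ)..1, (v + t • (w - v)).2 = (v.2 + w.2) / 2 := by
  simp only [Prod.snd_add, Prod.smul_snd, Prod.snd_sub, smul_eq_mul]
  rw [integral_affine]; ring

theorem trap_bdry_bary (α : ℝ) (k : ℕ) (hα : 0 < α) :
    trapBdryBary α k =
      ((α ^ 2 + α * (k + 1) + k * (k + 1) / 2) / (2 + 2 * α + k),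
        (α + 1) / (2 + 2 * α + k)) := by
  have hαk : (0:ℝ) < α + k := add_pos_of_pos_of_nonneg hα (Nat.cast_nonneg k)
  have hL1 : latticeLength ((0:ℝ), (0:ℝ)) (α + k, 0) = α + k := by
    rw [latticeLength_horiz _ _ (α + k) (by simp) (ne_of_gt hαk)]
    exact abs_of_pos hαk
  have hL2 : latticeLength ((α + k : ℝ), (0:ℝ)) ((α:ℝ), (1:ℝ)) = 1 := by
    refine latticeLength_prim _ _ (-(k:ℤ)) 1 (Or.inl rfl) ?_
    push_cast
    rw [Prod.ext_iff]
    constructor <;> simp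
  have hL3 : latticeLength ((α:ℝ), (1:ℝ)) ((0:ℝ), (1:ℝ)) = α := by
    rw [latticeLength_horiz _ _ (-α) (by rw [Prod.ext_iff]; constructor <;> simp)
      (by simpa using ne_of_gt hα), abs_neg, abs_of_pos hα]
  have hL4 : latticeLength ((0:ℝ), (1:ℝ)) ((0:ℝ), (0:ℝ)) = 1 := by
    refine latticeLength_prim _ _ 0 (-1) (Or.inr rfl) ?_
    rw [Prod.ext_iff]; constructor <;> simp
  have hden : (0:ℝ) < 2 + 2 * α + k := by positivity
  unfold trapBdryBary trapBdryInt edgeInt trapPerim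
  rw [hL1, hL2, hL3, hL4]
  simp only [integral_seg_fst, integral_seg_snd]
  rw [Prod.ext_iff]
  constructor <;>
  · simp only
    rw [div_eq_div_iff (by push_cast; linarith) (ne_of_gt hden)]
    push_cast
    ring
end

section
/- For the pentagon P above, the displacement vector 𝔇 between the boundary lattice barycenter and the area centroid equals (1/(6|P||∂P|))·(−α+2β+3αβ+3α²β, −β+2α+3αβ+3αβ²), where |P| = 1/2+α+β+αβ and |∂P| = 3+2α+2β. -/
open MeasureTheory

/-- The pentagon with vertices (1,0), (α+1,0), (α+1,β+1), (0,β+1), (0,1). -/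
noncomputable def pent (α β : ℝ) : Set (ℝ × ℝ) :=
  convexHull ℝ ({(1, 0), (α + 1, 0), (α + 1, β + 1), (0, β + 1), (0, 1)} : Set (ℝ × ℝ))

noncomputable def pentArea (α β : ℝ) : ℝ := (volume (pent α β)).toReal

noncomputable def pentPerim (α β : ℝ) : ℝ :=
  latticeLength (1, 0) (α + 1, 0) + latticeLength (α + 1, 0) (α + 1, β + 1) +
    latticeLength (α + 1, β + 1) (0, β + 1) + latticeLength (0, β + 1) (0, 1) +
    latticeLength (0, 1) (1, 0)

noncomputable def pentCentroid (α β : ℝ) : ℝ × ℝ :=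
  ((∫ p in pent α β, p.1) / pentArea α β, (∫ p in pent α β, p.2) / pentArea α β)

noncomputable def pentBdryInt (α β : ℝ) (f : ℝ × ℝ → ℝ) : ℝ :=
  edgeInt (1, 0) (α + 1, 0) f + edgeInt (α + 1, 0) (α + 1, β + 1) f +
    edgeInt (α + 1, β + 1) (0, β + 1) f + edgeInt (0, β + 1) (0, 1) f +
    edgeInt (0, 1) (1, 0) f

noncomputable def pentBdryBary (α β : ℝ) : ℝ × ℝ :=
  (pentBdryInt α β (fun p => p.1) / pentPerim α β,
   pentBdryInt α β (fun p => p.2) / pentPerim α β)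

/-- The vector 𝔇 joining the interior barycenter to the boundary barycenter. -/
noncomputable def pentD (α β : ℝ) : ℝ × ℝ := pentBdryBary α β - pentCentroid α β

/-- The moment-of-inertia matrix Π of the pentagon about its barycenter. -/
noncomputable def pentPi (α β : ℝ) : Matrix (Fin 2) (Fin 2) ℝ :=
  !![∫ p in pent α β, (p.1 - (pentCentroid α β).1) * (p.1 - (pentCentroid α β).1),
     ∫ p in pent α β, (p.1 - (pentCentroid α β).1) * (p.2 - (pentCentroid α β).2);
     ∫ p in pent α β, (p.2 - (pentCentroid α β).2) * (p.1 - (pentCentroid α β).1),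
     ∫ p in pent α β, (p.2 - (pentCentroid α β).2) * (p.2 - (pentCentroid α β).2)]

lemma lat_horiz (v w : ℝ × ℝ) (c : ℝ) (hc : c ≠ 0) (h : w - v = (c, 0)) :
    latticeLength v w = |c| := by
  have hset : {r : ℝ | ∃ (u : ℝ) (p q : ℤ), IsCoprime p q ∧
      w - v = u • ((p : ℝ), (q : ℝ)) ∧ r = |u|} = {|c|} := by
    ext r
    simp only [Set.mem_setOf_eq, Set.mem_singleton_iff]
    constructor
    · rintro ⟨u, p, q, hpq, huv, rfl⟩
      rw [h, Prod.ext_iff] at huv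
      obtain ⟨h1, h2⟩ := huv
      simp only [Prod.smul_fst, Prod.smul_snd, smul_eq_mul] at h1 h2
      have hu : u ≠ 0 := by rintro rfl; simp at h1; exact hc h1
      have hq : q = 0 := by
        have : (q : ℝ) = 0 := by
          field_simp at h2; rcases mul_eq_zero.mp h2.symm with h2|h2; exacts [absurd h2 hu, h2]
        exact_mod_cast this
      subst hq
      have hp : p = 1 ∨ p = -1 := Int.isUnit_iff.mp (isCoprime_zero_right.mp hpq)
      rcases hp with rfl | rfl
      · simp at h1; rw [h1]
      · push_cast at h1
        have : u = -c := by linarith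
        rw [this, abs_neg]
    · rintro rfl
      exact ⟨c, 1, 0, isCoprime_one_left, by simp [h, Prod.ext_iff], rfl⟩
  rw [latticeLength, hset, csInf_singleton]

lemma lat_vert (v w : ℝ × ℝ) (c : ℝ) (hc : c ≠ 0) (h : w - v = (0, c)) :
    latticeLength v w = |c| := by
  have hset : {r : ℝ | ∃ (u : ℝ) (p q : ℤ), IsCoprime p q ∧
      w - v = u • ((p : ℝ), (q : ℝ)) ∧ r = |u|} = {|c|} := by
    ext r
    simp only [Set.mem_setOf_eq, Set.mem_singleton_iff]
    constructor
    · rintro ⟨u, p, q, hpq, huv, rfl⟩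
      rw [h, Prod.ext_iff] at huv
      obtain ⟨h1, h2⟩ := huv
      simp only [Prod.smul_fst, Prod.smul_snd, smul_eq_mul] at h1 h2
      have hu : u ≠ 0 := by rintro rfl; simp at h2; exact hc h2
      have hp : p = 0 := by
        have : (p : ℝ) = 0 := by
          field_simp at h1; rcases mul_eq_zero.mp h1.symm with h1|h1; exacts [absurd h1 hu, h1]
        exact_mod_cast this
      subst hp
      have hq : q = 1 ∨ q = -1 := Int.isUnit_iff.mp (isCoprime_zero_left.mp hpq)
      rcases hq with rfl | rfl
      · simp at h2; rw [h2]
      · push_cast at h2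
        have : u = -c := by linarith
        rw [this, abs_neg]
    · rintro rfl
      exact ⟨c, 0, 1, isCoprime_one_right, by simp [h, Prod.ext_iff], rfl⟩
  rw [latticeLength, hset, csInf_singleton]

lemma lat_diag (v w : ℝ × ℝ) (c : ℝ) (hc : c ≠ 0) (h : w - v = (c, -c)) :
    latticeLength v w = |c| := by
  have hset : {r : ℝ | ∃ (u : ℝ) (p q : ℤ), IsCoprime p q ∧
      w - v = u • ((p : ℝ), (q : ℝ)) ∧ r = |u|} = {|c|} := by
    ext r
    simp only [Set.mem_setOf_eq, Set.mem_singleton_iff]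
    constructor
    · rintro ⟨u, p, q, hpq, huv, rfl⟩
      rw [h, Prod.ext_iff] at huv
      obtain ⟨h1, h2⟩ := huv
      simp only [Prod.smul_fst, Prod.smul_snd, smul_eq_mul] at h1 h2
      have hu : u ≠ 0 := by rintro rfl; simp at h1; exact hc h1
      have hpq' : (p : ℝ) = -(q : ℝ) := by
        have : u * (p : ℝ) + u * (q : ℝ) = 0 := by linarith
        have h3 : u * ((p : ℝ) + q) = 0 := by ring_nf; linarith [this]
        rcases mul_eq_zero.mp h3 with h4 | h4
        · exact absurd h4 hu
        · linarith
      have hpq2 : p = -q := by exact_mod_cast hpq' ; 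
      subst hpq2
      have hq : IsUnit q := isCoprime_self.mp (by simpa using hpq.neg_left)
      rcases Int.isUnit_iff.mp hq with rfl | rfl
      · push_cast at h1
        have : u = -c := by linarith
        rw [this, abs_neg]
      · push_cast at h1
        simp at h1; rw [h1]
    · rintro rfl
      exact ⟨c, 1, -1, (isCoprime_one_left).neg_right, by simp [h, Prod.ext_iff], rfl⟩
  rw [latticeLength, hset, csInf_singleton]

def pentS (α β : ℝ) : Set (ℝ × ℝ) :=
  {p : ℝ × ℝ | 0 ≤ p.1 ∧ p.1 ≤ α + 1 ∧ 0 ≤ p.2 ∧ p.2 ≤ β + 1 ∧ 1 ≤ p.1 + p.2}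

lemma pentS_convex (α β : ℝ) : Convex ℝ (pentS α β) := by
  rintro ⟨x1, y1⟩ ⟨hx1, hx1', hy1, hy1', hs1⟩ ⟨x2, y2⟩ ⟨hx2, hx2', hy2, hy2', hs2⟩
    a b ha hb hab
  simp only [pentS, Set.mem_setOf_eq, Prod.smul_mk, Prod.mk_add_mk, smul_eq_mul]
  refine ⟨?_, ?_, ?_, ?_, ?_⟩ <;> nlinarith

lemma pent_eq (α β : ℝ) (hα : 0 < α) (hβ : 0 < β) : pent α β = pentS α β := by
  apply le_antisymm
  · apply convexHull_min _ (pentS_convex α β)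
    intro p hp
    simp only [Set.mem_insert_iff, Set.mem_singleton_iff] at hp
    rcases hp with rfl | rfl | rfl | rfl | rfl <;>
      exact ⟨by norm_num <;> linarith, by norm_num <;> linarith, by norm_num <;> linarith,
        by norm_num <;> linarith, by norm_num <;> linarith⟩
  · rintro ⟨x, y⟩ ⟨hx, hx', hy, hy', hs⟩
    have hcx : Convex ℝ (pent α β) := convex_convexHull ℝ _
    have hmem : ∀ q ∈ ({(1, 0), (α + 1, 0), (α + 1, β + 1), (0, β + 1), (0, 1)} :
        Set (ℝ × ℝ)), q ∈ pent α β := fun q hq => subset_convexHull ℝ _ hq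
    -- the top point B = (x, β+1)
    have hB : ((x, β + 1) : ℝ × ℝ) ∈ pent α β := by
      have h1 : ((0, β + 1) : ℝ × ℝ) ∈ pent α β := hmem _ (by simp)
      have h2 : ((α + 1, β + 1) : ℝ × ℝ) ∈ pent α β := hmem _ (by simp)
      have hα1 : (0:ℝ) < α + 1 := by linarith
      have := hcx h1 h2 (a := (α + 1 - x) / (α + 1)) (b := x / (α + 1))
        (div_nonneg (by linarith) (by linarith)) (div_nonneg hx (by linarith))
        (by field_simp; ring)
      convert this using 1
      simp only [Prod.smul_mk, Prod.mk_add_mk, smul_eq_mul, Prod.mk.injEq]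
      constructor <;> field_simp <;> ring
    -- the bottom point A
    have hA : ((x, max 0 (1 - x)) : ℝ × ℝ) ∈ pent α β := by
      rcases le_or_gt x 1 with hx1 | hx1
      · have h1 : ((0, 1) : ℝ × ℝ) ∈ pent α β := hmem _ (by simp)
        have h2 : ((1, 0) : ℝ × ℝ) ∈ pent α β := hmem _ (by simp)
        have := hcx h1 h2 (a := 1 - x) (b := x) (by linarith) hx (by ring)
        convert this using 1
        simp only [Prod.smul_mk, Prod.mk_add_mk, smul_eq_mul, Prod.mk.injEq]
        constructor
        · ring
        · rw [max_eq_right (by linarith)]; ring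
      · have h1 : ((1, 0) : ℝ × ℝ) ∈ pent α β := hmem _ (by simp)
        have h2 : ((α + 1, 0) : ℝ × ℝ) ∈ pent α β := hmem _ (by simp)
        have := hcx h1 h2 (a := (α + 1 - x) / α) (b := (x - 1) / α)
          (by apply div_nonneg <;> linarith) (by apply div_nonneg <;> linarith)
          (by field_simp; ring)
        convert this using 1
        simp only [Prod.smul_mk, Prod.mk_add_mk, smul_eq_mul, Prod.mk.injEq]
        constructor
        · field_simp; ring
        · rw [max_eq_left (by linarith)]; ring
    -- interpolate vertically
    have hm : max 0 (1 - x) ≤ y := max_le hy (by linarith)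
    have hd : (0:ℝ) < β + 1 - max 0 (1 - x) := by
      have : max 0 (1 - x) ≤ 1 := max_le (by norm_num) (by linarith)
      linarith
    set c := max 0 (1 - x) with hc
    have := hcx hA hB (a := (β + 1 - y) / (β + 1 - c)) (b := (y - c) / (β + 1 - c))
      (by apply div_nonneg <;> linarith) (by apply div_nonneg <;> linarith)
      (by field_simp; ring)
    convert this using 1
    simp only [Prod.smul_mk, Prod.mk_add_mk, smul_eq_mul, Prod.mk.injEq]
    constructor <;> field_simp <;> ring

lemma pentS_isClosed (α β : ℝ) : IsClosed (pentS α β) := by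
  have h1 : IsClosed {p : ℝ × ℝ | 0 ≤ p.1} := isClosed_le continuous_const continuous_fst
  have h2 : IsClosed {p : ℝ × ℝ | p.1 ≤ α + 1} := isClosed_le continuous_fst continuous_const
  have h3 : IsClosed {p : ℝ × ℝ | 0 ≤ p.2} := isClosed_le continuous_const continuous_snd
  have h4 : IsClosed {p : ℝ × ℝ | p.2 ≤ β + 1} := isClosed_le continuous_snd continuous_const
  have h5 : IsClosed {p : ℝ × ℝ | 1 ≤ p.1 + p.2} :=
    isClosed_le continuous_const (continuous_fst.add continuous_snd)
  have : pentS α β = {p : ℝ × ℝ | 0 ≤ p.1} ∩ ({p | p.1 ≤ α + 1} ∩ ({p | 0 ≤ p.2} ∩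
      ({p | p.2 ≤ β + 1} ∩ {p | 1 ≤ p.1 + p.2}))) := by
    ext p; simp [pentS]
  rw [this]
  exact h1.inter (h2.inter (h3.inter (h4.inter h5)))

lemma pentS_compact (α β : ℝ) (hα : 0 < α) (hβ : 0 < β) : IsCompact (pentS α β) := by
  rw [← pent_eq α β hα hβ]
  exact (((((Set.finite_singleton _).insert _).insert _).insert _).insert
    _).isCompact_convexHull ℝ

lemma key (α β : ℝ) (hα : 0 < α) (hβ : 0 < β) (f : ℝ × ℝ → ℝ) (hf : Continuous f) :
    ∫ p in pentS α β, f p =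
      ∫ x in (0:ℝ)..(α+1), ∫ y in (max 0 (1-x))..(β+1), f (x, y) := by
  have hS : MeasurableSet (pentS α β) := (pentS_isClosed α β).measurableSet
  have hint : IntegrableOn f (pentS α β) volume :=
    hf.continuousOn.integrableOn_compact (pentS_compact α β hα hβ)
  have hind : Integrable ((pentS α β).indicator f) (volume : Measure (ℝ × ℝ)) :=
    (integrable_indicator_iff hS).mpr hint
  rw [← integral_indicator hS]
  rw [Measure.volume_eq_prod] at hind ⊢
  rw [integral_prod _ hind]
  have hle : ∀ x : ℝ, max 0 (1-x) ≤ β + 1 ∨ True := fun _ => Or.inr trivial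
  have houter : ∀ x : ℝ,
      (∫ y, (pentS α β).indicator f (x, y)) =
        (Set.Icc (0:ℝ) (α+1)).indicator
          (fun x => ∫ y in Set.Icc (max 0 (1-x)) (β+1), f (x, y)) x := by
    intro x
    by_cases hx : x ∈ Set.Icc (0:ℝ) (α+1)
    · rw [Set.indicator_of_mem hx]
      have hsec : (fun y => (pentS α β).indicator f (x, y)) =
          (Set.Icc (max 0 (1-x)) (β+1)).indicator (fun y => f (x, y)) := by
        funext y
        by_cases hy : y ∈ Set.Icc (max 0 (1-x)) (β+1)
        · rw [Set.indicator_of_mem hy, Set.indicator_of_mem]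
          obtain ⟨hy1, hy2⟩ := hy
          exact ⟨hx.1, hx.2, le_trans (le_max_left _ _) hy1, hy2,
            by have := le_trans (le_max_right _ _) hy1; linarith⟩
        · rw [Set.indicator_of_notMem hy, Set.indicator_of_notMem]
          rintro ⟨h1, h2, h3, h4, h5⟩
          exact hy ⟨max_le h3 (by linarith), h4⟩
      rw [hsec, integral_indicator measurableSet_Icc]
    · rw [Set.indicator_of_notMem hx]
      have : (fun y => (pentS α β).indicator f (x, y)) = fun _ => 0 := by
        funext y
        rw [Set.indicator_of_notMem]
        rintro ⟨h1, h2, _⟩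
        exact hx ⟨h1, h2⟩
      rw [this, integral_zero]
  simp only [houter]
  rw [integral_indicator measurableSet_Icc]
  rw [integral_Icc_eq_integral_Ioc, ← intervalIntegral.integral_of_le (by linarith)]
  apply intervalIntegral.integral_congr
  intro x hx
  have hmle : max 0 (1-x) ≤ β + 1 := by
    apply max_le (by linarith) ?_
    rw [Set.uIcc_of_le (by linarith)] at hx
    have := hx.1; linarith
  dsimp only
  rw [integral_Icc_eq_integral_Ioc, ← intervalIntegral.integral_of_le hmle]

lemma poly_int (a b c d e : ℝ) :
    ∫ x in a..b, (c + d*x + e*x^2) = c*(b-a) + d*(b^2-a^2)/2 + e*(b^3-a^3)/3 := by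
  have hd : ∀ x ∈ Set.uIcc a b,
      HasDerivAt (fun y : ℝ => c*y^1 + d/2*y^2 + e/3*y^3) (c + d*x + e*x^2) x := by
    intro x _
    have h := (((hasDerivAt_pow 1 x).const_mul c).add
        ((hasDerivAt_pow 2 x).const_mul (d/2))).add ((hasDerivAt_pow 3 x).const_mul (e/3))
    refine h.congr_deriv ?_
    push_cast
    ring
  rw [intervalIntegral.integral_eq_sub_of_hasDerivAt hd
    ((by fun_prop : Continuous fun x : ℝ => c + d*x + e*x^2).intervalIntegrable a b)]
  ring

lemma split_int (α β : ℝ) (hα : 0 < α) (f g : ℝ → ℝ)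
    (hf : Continuous f)
    (h1 : ∀ x ∈ Set.uIcc (0:ℝ) 1, f x = g x) (h2 : ∀ x ∈ Set.uIcc (1:ℝ) (α+1), f x = g x)
    (hg1 : ℝ) (hg2 : ℝ)
    (e1 : ∫ x in (0:ℝ)..1, g x = hg1) (e2 : ∫ x in (1:ℝ)..(α+1), g x = hg2) :
    ∫ x in (0:ℝ)..(α+1), f x = hg1 + hg2 := by
  rw [← intervalIntegral.integral_add_adjacent_intervals
    (hf.intervalIntegrable 0 1) (hf.intervalIntegrable 1 (α+1))]
  rw [intervalIntegral.integral_congr h1, intervalIntegral.integral_congr h2, e1, e2]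

lemma I0 (α β : ℝ) (hα : 0 < α) (hβ : 0 < β) :
    ∫ p in pentS α β, (1:ℝ) = 1/2 + α + β + α*β := by
  rw [key α β hα hβ _ continuous_const]
  have hinner : ∀ x : ℝ, (∫ y in (max 0 (1-x))..(β+1), (1:ℝ)) = β + 1 - max 0 (1-x) := by
    intro x; rw [intervalIntegral.integral_const]; simp
  simp only [hinner]
  rw [split_int α β hα _ (fun x => (β + 1 - max 0 (1-x))) (by fun_prop)
    (fun x hx => rfl) (fun x hx => rfl)
    (β + 1/2) (α * (β+1)) ?_ ?_]
  · ring
  · have : ∀ x ∈ Set.uIcc (0:ℝ) 1, β + 1 - max 0 (1-x) = β + 1*x + 0*x^2 := by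
      intro x hx
      rw [Set.uIcc_of_le (by norm_num)] at hx
      rw [max_eq_right (by linarith [hx.1, hx.2])]; ring
    rw [intervalIntegral.integral_congr this, poly_int]; ring
  · have : ∀ x ∈ Set.uIcc (1:ℝ) (α+1), β + 1 - max 0 (1-x) = (β+1) + 0*x + 0*x^2 := by
      intro x hx
      rw [Set.uIcc_of_le (by linarith)] at hx
      rw [max_eq_left (by linarith [hx.1])]; ring
    rw [intervalIntegral.integral_congr this, poly_int]; ring

lemma I1 (α β : ℝ) (hα : 0 < α) (hβ : 0 < β) :
    ∫ p in pentS α β, p.1 = (β+1)*(α+1)^2/2 - 1/6 := by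
  rw [key α β hα hβ _ continuous_fst]
  have hinner : ∀ x : ℝ, (∫ y in (max 0 (1-x))..(β+1), x) = (β + 1 - max 0 (1-x)) * x := by
    intro x; rw [intervalIntegral.integral_const]; simp
  simp only [hinner]
  rw [split_int α β hα _ (fun x => (β + 1 - max 0 (1-x)) * x) (by fun_prop)
    (fun x hx => rfl) (fun x hx => rfl)
    (β/2 + 1/3) ((β+1)*((α+1)^2-1)/2) ?_ ?_]
  · ring
  · have : ∀ x ∈ Set.uIcc (0:ℝ) 1, (β + 1 - max 0 (1-x)) * x = 0 + β*x + 1*x^2 := by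
      intro x hx
      rw [Set.uIcc_of_le (by norm_num)] at hx
      rw [max_eq_right (by linarith [hx.1, hx.2])]; ring
    rw [intervalIntegral.integral_congr this, poly_int]; ring
  · have : ∀ x ∈ Set.uIcc (1:ℝ) (α+1), (β + 1 - max 0 (1-x)) * x = 0 + (β+1)*x + 0*x^2 := by
      intro x hx
      rw [Set.uIcc_of_le (by linarith)] at hx
      rw [max_eq_left (by linarith [hx.1])]; ring
    rw [intervalIntegral.integral_congr this, poly_int]; ring

lemma I2 (α β : ℝ) (hα : 0 < α) (hβ : 0 < β) :
    ∫ p in pentS α β, p.2 = (α+1)*(β+1)^2/2 - 1/6 := by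
  rw [key α β hα hβ _ continuous_snd]
  have hinner : ∀ x : ℝ, (∫ y in (max 0 (1-x))..(β+1), y)
      = ((β+1)^2 - (max 0 (1-x))^2)/2 := by
    intro x; rw [integral_id]
  simp only [hinner]
  rw [split_int α β hα _ (fun x => ((β+1)^2 - (max 0 (1-x))^2)/2) (by fun_prop)
    (fun x hx => rfl) (fun x hx => rfl)
    ((β+1)^2/2 - 1/6) (α*(β+1)^2/2) ?_ ?_]
  · ring
  · have : ∀ x ∈ Set.uIcc (0:ℝ) 1, ((β+1)^2 - (max 0 (1-x))^2)/2
        = ((β+1)^2/2 - 1/2) + 1*x + (-1/2)*x^2 := by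
      intro x hx
      rw [Set.uIcc_of_le (by norm_num)] at hx
      rw [max_eq_right (by linarith [hx.1, hx.2])]; ring
    rw [intervalIntegral.integral_congr this, poly_int]; ring
  · have : ∀ x ∈ Set.uIcc (1:ℝ) (α+1), ((β+1)^2 - (max 0 (1-x))^2)/2
        = (β+1)^2/2 + 0*x + 0*x^2 := by
      intro x hx
      rw [Set.uIcc_of_le (by linarith)] at hx
      rw [max_eq_left (by linarith [hx.1])]; ring
    rw [intervalIntegral.integral_congr this, poly_int]; ring


lemma edgeInt_fst (v w : ℝ × ℝ) :
    ∫ t in (0:ℝ)..1, (v + t • (w - v)).1 = (v.1 + w.1)/2 := by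
  have h : ∀ t ∈ Set.uIcc (0:ℝ) 1, (v + t • (w - v)).1
      = v.1 + (w.1 - v.1)*t + 0*t^2 := by
    intro t _
    simp only [Prod.fst_add, Prod.smul_fst, Prod.fst_sub, smul_eq_mul]
    ring
  rw [intervalIntegral.integral_congr h, poly_int]; ring

lemma edgeInt_snd (v w : ℝ × ℝ) :
    ∫ t in (0:ℝ)..1, (v + t • (w - v)).2 = (v.2 + w.2)/2 := by
  have h : ∀ t ∈ Set.uIcc (0:ℝ) 1, (v + t • (w - v)).2
      = v.2 + (w.2 - v.2)*t + 0*t^2 := by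
    intro t _
    simp only [Prod.snd_add, Prod.smul_snd, Prod.snd_sub, smul_eq_mul]
    ring
  rw [intervalIntegral.integral_congr h, poly_int]; ring

lemma lat1 (α β : ℝ) (hα : 0 < α) : latticeLength (1, 0) (α + 1, 0) = α := by
  rw [lat_horiz _ _ α (ne_of_gt hα) (by simp [Prod.ext_iff]), abs_of_pos hα]

lemma lat2 (α β : ℝ) (hβ : 0 < β) : latticeLength (α + 1, 0) (α + 1, β + 1) = β + 1 := by
  rw [lat_vert _ _ (β+1) (by linarith) (by simp [Prod.ext_iff]), abs_of_pos (by linarith)]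

lemma lat3 (α β : ℝ) (hα : 0 < α) : latticeLength (α + 1, β + 1) (0, β + 1) = α + 1 := by
  rw [lat_horiz _ _ (-(α+1)) (by intro h; nlinarith [h]) (by simp [Prod.ext_iff]),
    abs_neg, abs_of_pos (by linarith)]

lemma lat4 (α β : ℝ) (hβ : 0 < β) : latticeLength (0, β + 1) (0, 1) = β := by
  rw [lat_vert _ _ (-β) (by intro h; nlinarith [h]) (by simp [Prod.ext_iff]),
    abs_neg, abs_of_pos hβ]

lemma lat5 : latticeLength (0, 1) ((1 : ℝ), (0 : ℝ)) = 1 := by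
  rw [lat_diag _ _ 1 one_ne_zero (by simp [Prod.ext_iff]), abs_one]

theorem pent_D (α β : ℝ) (hα : 0 < α) (hβ : 0 < β) :
    pentD α β =
      (1 / (6 * (1 / 2 + α + β + α * β) * (3 + 2 * α + 2 * β))) •
        ((-α + 2 * β + 3 * α * β + 3 * α ^ 2 * β,
          -β + 2 * α + 3 * α * β + 3 * α * β ^ 2) : ℝ × ℝ) := by
  have hA : pentArea α β = 1/2 + α + β + α*β := by
    have h := I0 α β hα hβ
    rw [setIntegral_const, smul_eq_mul, mul_one] at h
    rw [pentArea, pent_eq α β hα hβ]; exact h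
  have hL : pentPerim α β = 3 + 2*α + 2*β := by
    rw [pentPerim, lat1 α β hα, lat2 α β hβ, lat3 α β hα, lat4 α β hβ, lat5]
    ring
  have hIx : ∫ p in pent α β, p.1 = (β+1)*(α+1)^2/2 - 1/6 := by
    rw [pent_eq α β hα hβ]; exact I1 α β hα hβ
  have hIy : ∫ p in pent α β, p.2 = (α+1)*(β+1)^2/2 - 1/6 := by
    rw [pent_eq α β hα hβ]; exact I2 α β hα hβ
  have hBx : pentBdryInt α β (fun p => p.1) =
      α*(α+2)/2 + (β+1)*(α+2+α)/2 + (α+1)*(α+1)/2 + 1/2 := by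
    simp only [pentBdryInt, edgeInt, edgeInt_fst,
      lat1 α β hα, lat2 α β hβ, lat3 α β hα, lat4 α β hβ, lat5]
    ring
  have hBy : pentBdryInt α β (fun p => p.2) =
      (β+1)*(β+1)/2 + (α+1)*(β+1+(β+1))/2 + β*(β+2)/2 + 1/2 := by
    simp only [pentBdryInt, edgeInt, edgeInt_snd,
      lat1 α β hα, lat2 α β hβ, lat3 α β hα, lat4 α β hβ, lat5]
    ring
  have hA0 : (1:ℝ)/2 + α + β + α*β ≠ 0 := by nlinarith
  have hL0 : (3:ℝ) + 2*α + 2*β ≠ 0 := by nlinarith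
  rw [pentD, pentBdryBary, pentCentroid, Prod.ext_iff]
  constructor
  · simp only [Prod.fst_sub, Prod.smul_fst, smul_eq_mul]
    rw [hA, hL, hIx, hBx]
    field_simp
    ring
  · simp only [Prod.snd_sub, Prod.smul_snd, smul_eq_mul]
    rw [hA, hL, hIy, hBy]
    field_simp
    ring
end
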